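/- arXiv:2508.20199 — 4 statements merged into one kernel-verified Lean document; each statement's English description precedes it below -/
import Mathlib

section
/- The center of the first Weyl algebra W = k⟨x,y⟩/(xy - yx - 1) over an algebraically closed field k of characteristic p > 0 is the polynomial subalgebra k[x^p, y^p]. -/
/-- The defining relation of the first Weyl algebra: `x * y = y * x + 1`. -/
inductive WeylRel (k : Type*) [CommRing k] :
    FreeAlgebra k (Fin 2) → FreeAlgebra k (Fin 2) → Prop
  | rel : WeylRel k (FreeAlgebra.ι k 0 * FreeAlgebra.ι k 1)
      (FreeAlgebra.ι k 1 * FreeAlgebra.ι k 0 + 1)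

/-- The first Weyl algebra `k⟨x,y⟩/(xy - yx - 1)`. -/
abbrev Weyl (k : Type*) [CommRing k] := RingQuot (WeylRel k)

/-- The image of `x` in the Weyl algebra. -/
noncomputable def Weyl.x (k : Type*) [CommRing k] : Weyl k :=
  RingQuot.mkAlgHom k (WeylRel k) (FreeAlgebra.ι k 0)

/-- The image of `y` in the Weyl algebra. -/
noncomputable def Weyl.y (k : Type*) [CommRing k] : Weyl k :=
  RingQuot.mkAlgHom k (WeylRel k) (FreeAlgebra.ι k 1)

namespace WeylAux

variable (k : Type*) [CommRing k]

local notation "X" => Weyl.x k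
local notation "Y" => Weyl.y k

theorem weyl_comm : X * Y = Y * X + 1 := by
  have h := RingQuot.mkAlgHom_rel k (WeylRel.rel (k := k))
  simpa [Weyl.x, Weyl.y, map_mul, map_add, map_one] using h

theorem x_mul_y_pow (n : ℕ) : X * Y ^ n = Y ^ n * X + n • Y ^ (n - 1) := by
  induction n with
  | zero => simp
  | succ n ih =>
    rw [pow_succ, ← mul_assoc, ih, Nat.add_sub_cancel, add_mul, mul_assoc, weyl_comm,
      mul_add, mul_one, ← mul_assoc, ← pow_succ, succ_nsmul, smul_mul_assoc]
    rcases Nat.eq_zero_or_pos n with h | h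
    · subst h; simp
    · rw [← pow_succ, Nat.sub_add_cancel h]; abel

theorem x_pow_mul_y (n : ℕ) : X ^ n * Y = Y * X ^ n + n • X ^ (n - 1) := by
  induction n with
  | zero => simp
  | succ n ih =>
    rw [pow_succ, mul_assoc, weyl_comm, mul_add, mul_one, ← mul_assoc, ih, Nat.add_sub_cancel,
      add_mul, smul_mul_assoc, mul_assoc (Weyl.y k), ← pow_succ, succ_nsmul]
    rcases Nat.eq_zero_or_pos n with h | h
    · subst h; simp
    · rw [← pow_succ, Nat.sub_add_cancel h]; abel

theorem adjoin_xy : Algebra.adjoin k ({X, Y} : Set (Weyl k)) = ⊤ := by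
  rw [eq_top_iff]
  rintro w -
  obtain ⟨f, rfl⟩ := RingQuot.mkAlgHom_surjective k (WeylRel k) w
  induction f using FreeAlgebra.induction with
  | grade0 r => rw [AlgHom.commutes]; exact Subalgebra.algebraMap_mem _ r
  | grade1 i =>
    fin_cases i
    · exact Algebra.subset_adjoin (Or.inl rfl)
    · exact Algebra.subset_adjoin (Or.inr rfl)
  | add a b ha hb => rw [map_add]; exact add_mem ha hb
  | mul a b ha hb => rw [map_mul]; exact mul_mem ha hb

theorem mem_center_of_comm {z : Weyl k} (hx : z * X = X * z) (hy : z * Y = Y * z) :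
    z ∈ Subalgebra.center k (Weyl k) := by
  rw [Subalgebra.mem_center_iff]
  intro a
  have ha : a ∈ Algebra.adjoin k ({X, Y} : Set (Weyl k)) := by rw [adjoin_xy]; trivial
  induction ha using Algebra.adjoin_induction with
  | mem w hw => rcases hw with rfl | rfl
                · exact hx.symm
                · exact hy.symm
  | algebraMap r => exact (Algebra.commutes r z)
  | add a b _ _ ha hb => rw [add_mul, mul_add, ha, hb]
  | mul a b _ _ ha hb => rw [mul_assoc, hb, ← mul_assoc, ha, mul_assoc]

end WeylAux
open MvPolynomial

namespace WeylAux2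

variable (k : Type*) [CommRing k]

noncomputable def Xop : Module.End k (MvPolynomial (Fin 2) k) :=
  LinearMap.mulLeft k (X 0) + (pderiv 1).toLinearMap

noncomputable def Yop : Module.End k (MvPolynomial (Fin 2) k) :=
  LinearMap.mulLeft k (X 1)

theorem op_rel : Xop k * Yop k = Yop k * Xop k + 1 := by
  apply LinearMap.ext
  intro f
  simp only [Xop, Yop, Module.End.mul_apply, LinearMap.add_apply, LinearMap.mulLeft_apply,
    Module.End.one_apply, Derivation.coeFn_coe, Derivation.leibniz, pderiv_X_self, smul_eq_mul, mul_one]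
  ring

theorem Xop_pow_one (b : ℕ) : (Xop k ^ b) 1 = X 0 ^ b := by
  induction b with
  | zero => simp
  | succ n ih =>
    rw [pow_succ', Module.End.mul_apply, ih]
    simp [Xop, Derivation.leibniz_pow, pderiv_X_of_ne (by decide : (0 : Fin 2) ≠ 1), pow_succ']

theorem Yop_pow (a : ℕ) (f : MvPolynomial (Fin 2) k) : (Yop k ^ a) f = X 1 ^ a * f := by
  rw [Yop, LinearMap.pow_mulLeft, LinearMap.mulLeft_apply]

end WeylAux2

namespace WeylAux3

open WeylAux WeylAux2 MvPolynomial

variable (k : Type*) [CommRing k]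

local notation "Wx" => Weyl.x k
local notation "Wy" => Weyl.y k

noncomputable def φ : Weyl k →ₐ[k] Module.End k (MvPolynomial (Fin 2) k) :=
  RingQuot.liftAlgHom k ⟨FreeAlgebra.lift k ![Xop k, Yop k], by
    rintro _ _ ⟨⟩
    simp only [map_mul, map_add, map_one, FreeAlgebra.lift_ι_apply, Matrix.cons_val_zero,
      Matrix.cons_val_one, Matrix.head_cons]
    exact op_rel k⟩

theorem φ_x : φ k Wx = Xop k := by
  rw [Weyl.x, φ, RingQuot.liftAlgHom_mkAlgHom_apply]
  simp [FreeAlgebra.lift_ι_apply]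

theorem φ_y : φ k Wy = Yop k := by
  rw [Weyl.y, φ, RingQuot.liftAlgHom_mkAlgHom_apply]
  simp [FreeAlgebra.lift_ι_apply]

/-- The basis family `y^a x^b`. -/
noncomputable def e (ab : ℕ × ℕ) : Weyl k := Wy ^ ab.1 * Wx ^ ab.2

theorem φ_e_one (ab : ℕ × ℕ) :
    φ k (e k ab) 1 = X 1 ^ ab.1 * X 0 ^ ab.2 := by
  rw [e, map_mul, map_pow, map_pow, φ_x, φ_y, Module.End.mul_apply, Xop_pow_one, Yop_pow]

noncomputable def ev : Weyl k →ₗ[k] MvPolynomial (Fin 2) k where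
  toFun w := φ k w 1
  map_add' u v := by simp
  map_smul' c u := by simp

theorem e_li : LinearIndependent k (e k) := by
  classical
  have g_inj : Function.Injective
      (fun ab : ℕ × ℕ => Finsupp.single (1 : Fin 2) ab.1 + Finsupp.single (0 : Fin 2) ab.2) := by
    intro a b h
    have h1 := DFunLike.congr_fun h (1 : Fin 2)
    have h0 := DFunLike.congr_fun h (0 : Fin 2)
    simp [Finsupp.single_apply] at h1 h0
    exact Prod.ext h1 h0
  have hli := (basisMonomials (Fin 2) k).linearIndependent.comp _ g_inj
  apply LinearIndependent.of_comp (ev k)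
  have key : (⇑(ev k) ∘ e k) =
      (basisMonomials (Fin 2) k) ∘
        (fun ab : ℕ × ℕ => Finsupp.single (1 : Fin 2) ab.1 + Finsupp.single (0 : Fin 2) ab.2) := by
    funext ab
    show φ k (e k ab) 1 = _
    simp only [Function.comp_apply, coe_basisMonomials, φ_e_one]
    rw [X_pow_eq_monomial, X_pow_eq_monomial, monomial_mul, mul_one]
  rw [key]
  exact hli

theorem y_mul_e (ab : ℕ × ℕ) : Wy * e k ab = e k (ab.1 + 1, ab.2) := by
  rw [e, e, ← mul_assoc, ← pow_succ']

theorem x_mul_e (ab : ℕ × ℕ) :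
    Wx * e k ab = e k (ab.1, ab.2 + 1) + ab.1 • e k (ab.1 - 1, ab.2) := by
  rw [e, ← mul_assoc, x_mul_y_pow, add_mul, smul_mul_assoc, e, e, mul_assoc, ← pow_succ']

theorem e_mul_x (ab : ℕ × ℕ) : e k ab * Wx = e k (ab.1, ab.2 + 1) := by
  rw [e, e, mul_assoc, ← pow_succ]

theorem e_mul_y (ab : ℕ × ℕ) :
    e k ab * Wy = e k (ab.1 + 1, ab.2) + ab.2 • e k (ab.1, ab.2 - 1) := by
  rw [e, mul_assoc, x_pow_mul_y, mul_add, ← mul_assoc, ← pow_succ, mul_smul_comm, e, e]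

theorem span_e : Submodule.span k (Set.range (e k)) = ⊤ := by
  set S := Submodule.span k (Set.range (e k)) with hS
  have hmem : ∀ ab, e k ab ∈ S := fun ab => Submodule.subset_span ⟨ab, rfl⟩
  have h1 : (1 : Weyl k) ∈ S := by
    have := hmem (0, 0); simpa [e] using this
  have hx : ∀ s ∈ S, Wx * s ∈ S := by
    intro s hs
    induction hs using Submodule.span_induction with
    | mem w hw =>
      obtain ⟨ab, rfl⟩ := hw
      rw [x_mul_e]
      exact add_mem (hmem _) (nsmul_mem (hmem _) _)
    | zero => simpa using S.zero_mem
    | add u v _ _ hu hv => rw [mul_add]; exact add_mem hu hv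
    | smul c u _ hu => rw [mul_smul_comm]; exact S.smul_mem c hu
  have hy : ∀ s ∈ S, Wy * s ∈ S := by
    intro s hs
    induction hs using Submodule.span_induction with
    | mem w hw =>
      obtain ⟨ab, rfl⟩ := hw
      rw [y_mul_e]
      exact hmem _
    | zero => simpa using S.zero_mem
    | add u v _ _ hu hv => rw [mul_add]; exact add_mem hu hv
    | smul c u _ hu => rw [mul_smul_comm]; exact S.smul_mem c hu
  have main : ∀ f : FreeAlgebra k (Fin 2), ∀ s ∈ S,
      RingQuot.mkAlgHom k (WeylRel k) f * s ∈ S := by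
    intro f
    induction f using FreeAlgebra.induction with
    | grade0 r =>
      intro s hs
      rw [AlgHom.commutes, Algebra.algebraMap_eq_smul_one, smul_mul_assoc, one_mul]
      exact S.smul_mem r hs
    | grade1 i =>
      fin_cases i
      · exact hx
      · exact hy
    | add a b ha hb =>
      intro s hs
      rw [map_add, add_mul]
      exact add_mem (ha s hs) (hb s hs)
    | mul a b ha hb =>
      intro s hs
      rw [map_mul, mul_assoc]
      exact ha _ (hb s hs)
  rw [eq_top_iff]
  intro w _
  obtain ⟨f, rfl⟩ := RingQuot.mkAlgHom_surjective k (WeylRel k) w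
  simpa using main f 1 h1

/-- The basis `y^a x^b` of the Weyl algebra. -/
noncomputable def B : Module.Basis (ℕ × ℕ) k (Weyl k) :=
  Module.Basis.mk (e_li k) (by rw [span_e])

theorem B_apply (ab : ℕ × ℕ) : B k ab = e k ab := by rw [B, Module.Basis.mk_apply]

end WeylAux3

namespace WeylAux4

open WeylAux WeylAux3

variable (k : Type*) [Field k]

local notation "Wx" => Weyl.x k
local notation "Wy" => Weyl.y k

noncomputable def adx : Weyl k →ₗ[k] Weyl k :=
  LinearMap.mulLeft k Wx - LinearMap.mulRight k Wx

noncomputable def ady : Weyl k →ₗ[k] Weyl k :=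
  LinearMap.mulRight k Wy - LinearMap.mulLeft k Wy

theorem adx_e (i : ℕ × ℕ) : adx k (e k i) = ((i.1 : k)) • e k (i.1 - 1, i.2) := by
  rw [adx, LinearMap.sub_apply, LinearMap.mulLeft_apply, LinearMap.mulRight_apply,
    x_mul_e, e_mul_x, add_sub_cancel_left, Nat.cast_smul_eq_nsmul]

theorem ady_e (i : ℕ × ℕ) : ady k (e k i) = ((i.2 : k)) • e k (i.1, i.2 - 1) := by
  rw [ady, LinearMap.sub_apply, LinearMap.mulLeft_apply, LinearMap.mulRight_apply,
    e_mul_y, y_mul_e, add_sub_cancel_left, Nat.cast_smul_eq_nsmul]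

theorem repr_ad (D : Weyl k →ₗ[k] Weyl k) (g : ℕ × ℕ → ℕ × ℕ) (m : ℕ × ℕ → k)
    (hD : ∀ i, D (e k i) = m i • e k (g i)) (z : Weyl k) :
    (B k).repr (D z) =
      ((B k).repr z).sum fun i a => (a * m i) • Finsupp.single (g i) (1 : k) := by
  conv_lhs => rw [← Module.Basis.linearCombination_repr (B k) z, Finsupp.linearCombination_apply,
    Finsupp.sum, map_sum, map_sum]
  rw [Finsupp.sum]
  apply Finset.sum_congr rfl
  intro i _
  rw [map_smul, B_apply, hD, map_smul, map_smul, ← B_apply, Module.Basis.repr_self, smul_smul,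
    Finsupp.smul_single, smul_eq_mul, mul_one]

theorem key_x (z : Weyl k) (hz : adx k z = 0) {ab : ℕ × ℕ}
    (hab : ab ∈ ((B k).repr z).support) : (ab.1 : k) = 0 := by
  by_contra hne
  have hab1 : ab.1 ≠ 0 := fun h => hne (by rw [h, Nat.cast_zero])
  have h0 : ((B k).repr (adx k z)) (ab.1 - 1, ab.2) = 0 := by rw [hz, map_zero]; rfl
  rw [repr_ad k (adx k) (fun i => (i.1 - 1, i.2)) (fun i => (i.1 : k)) (adx_e k) z,
    Finsupp.sum_apply, Finsupp.sum] at h0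
  rw [Finset.sum_eq_single_of_mem ab hab] at h0
  · rw [Finsupp.smul_apply, Finsupp.single_apply, if_pos rfl, smul_eq_mul, mul_one] at h0
    exact hne (by
      rcases mul_eq_zero.mp h0 with h | h
      · exact absurd h (Finsupp.mem_support_iff.mp hab)
      · exact h)
  · intro i _ hi
    rw [Finsupp.smul_apply, Finsupp.single_apply, smul_eq_mul]
    split_ifs with hif
    · rcases Nat.eq_zero_or_pos i.1 with h1 | h1
      · rw [h1, Nat.cast_zero, mul_zero, zero_mul]
      · exfalso
        apply hi
        have h2 : i.2 = ab.2 := (Prod.mk.injEq _ _ _ _ ▸ hif).2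
        have h3 : i.1 - 1 = ab.1 - 1 := (Prod.mk.injEq _ _ _ _ ▸ hif).1
        have : i.1 = ab.1 := by omega
        exact Prod.ext this h2
    · rw [mul_zero]

theorem key_y (z : Weyl k) (hz : ady k z = 0) {ab : ℕ × ℕ}
    (hab : ab ∈ ((B k).repr z).support) : (ab.2 : k) = 0 := by
  by_contra hne
  have hab1 : ab.2 ≠ 0 := fun h => hne (by rw [h, Nat.cast_zero])
  have h0 : ((B k).repr (ady k z)) (ab.1, ab.2 - 1) = 0 := by rw [hz, map_zero]; rfl
  rw [repr_ad k (ady k) (fun i => (i.1, i.2 - 1)) (fun i => (i.2 : k)) (ady_e k) z,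
    Finsupp.sum_apply, Finsupp.sum] at h0
  rw [Finset.sum_eq_single_of_mem ab hab] at h0
  · rw [Finsupp.smul_apply, Finsupp.single_apply, if_pos rfl, smul_eq_mul, mul_one] at h0
    exact hne (by
      rcases mul_eq_zero.mp h0 with h | h
      · exact absurd h (Finsupp.mem_support_iff.mp hab)
      · exact h)
  · intro i _ hi
    rw [Finsupp.smul_apply, Finsupp.single_apply, smul_eq_mul]
    split_ifs with hif
    · rcases Nat.eq_zero_or_pos i.2 with h1 | h1
      · rw [h1, Nat.cast_zero, mul_zero, zero_mul]
      · exfalso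
        apply hi
        have h2 : i.1 = ab.1 := (Prod.mk.injEq _ _ _ _ ▸ hif).1
        have h3 : i.2 - 1 = ab.2 - 1 := (Prod.mk.injEq _ _ _ _ ▸ hif).2
        have : i.2 = ab.2 := by omega
        exact Prod.ext h2 this
    · rw [mul_zero]

end WeylAux4

theorem center_of_weyl_algebra (k : Type*) [Field k] [IsAlgClosed k]
    (p : ℕ) (hp : p.Prime) [CharP k p] :
    Subalgebra.center k (Weyl k) =
      Algebra.adjoin k {Weyl.x k ^ p, Weyl.y k ^ p} := by
  have hp0 : ∀ w : Weyl k, p • w = 0 := by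
    intro w
    rw [← Nat.cast_smul_eq_nsmul k, CharP.cast_eq_zero, zero_smul]
  apply le_antisymm
  · intro z hz
    have hcomm := Subalgebra.mem_center_iff.mp hz
    have hadx : WeylAux4.adx k z = 0 := by
      rw [WeylAux4.adx, LinearMap.sub_apply, LinearMap.mulLeft_apply, LinearMap.mulRight_apply]
      exact sub_eq_zero_of_eq (hcomm (Weyl.x k))
    have hady : WeylAux4.ady k z = 0 := by
      rw [WeylAux4.ady, LinearMap.sub_apply, LinearMap.mulLeft_apply, LinearMap.mulRight_apply]
      exact sub_eq_zero_of_eq (hcomm (Weyl.y k)).symm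
    rw [← Module.Basis.linearCombination_repr (WeylAux3.B k) z, Finsupp.linearCombination_apply,
      Finsupp.sum]
    apply Subalgebra.sum_mem
    intro i hi
    have h1 : p ∣ i.1 := (CharP.cast_eq_zero_iff k p _).mp (WeylAux4.key_x k z hadx hi)
    have h2 : p ∣ i.2 := (CharP.cast_eq_zero_iff k p _).mp (WeylAux4.key_y k z hady hi)
    obtain ⟨m, hm⟩ := h1
    obtain ⟨n, hn⟩ := h2
    apply Subalgebra.smul_mem
    rw [WeylAux3.B_apply, WeylAux3.e, hm, hn, pow_mul, pow_mul]
    have hxmem : Weyl.x k ^ p ∈ Algebra.adjoin k {Weyl.x k ^ p, Weyl.y k ^ p} :=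
      Algebra.subset_adjoin (Set.mem_insert _ _)
    have hymem : Weyl.y k ^ p ∈ Algebra.adjoin k {Weyl.x k ^ p, Weyl.y k ^ p} :=
      Algebra.subset_adjoin (Set.mem_insert_of_mem _ rfl)
    exact mul_mem (pow_mem hymem m) (pow_mem hxmem n)
  · apply Algebra.adjoin_le
    rintro w (rfl | rfl)
    · apply WeylAux.mem_center_of_comm
      · rw [← pow_succ, ← pow_succ']
      · rw [WeylAux.x_pow_mul_y, hp0, add_zero]
    · apply WeylAux.mem_center_of_comm
      · rw [WeylAux.x_mul_y_pow, hp0, add_zero]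
      · rw [← pow_succ, ← pow_succ']
end

section
/- The first Weyl algebra W over a field k of characteristic p > 0 is a free module of rank p^2 over its center k[x^p, y^p], with basis {x^i y^j : 0 ≤ i, j ≤ p-1}. -/
set_option linter.unusedVariables false
set_option linter.unnecessarySimpa false

namespace WeylPf

variable (k : Type*) [Field k]

local notation "W" => Weyl k
local notation "x" => Weyl.x k
local notation "y" => Weyl.y k

theorem xy_rel : x * y = y * x + 1 := by
  have h := RingQuot.mkAlgHom_rel k (WeylRel.rel (k := k))
  simp only [map_mul, map_add, map_one] at h
  exact h

/-- the module `k[t,s]` with basis indexed by `ℕ × ℕ` -/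
abbrev M := (ℕ × ℕ) →₀ k

noncomputable def e (q : ℕ × ℕ) : M k := Finsupp.single q 1

noncomputable def Xop : M k →ₗ[k] M k :=
  Finsupp.lsum ℕ fun q => LinearMap.toSpanSingleton k (M k) (e k (q.1 + 1, q.2))

noncomputable def Yop : M k →ₗ[k] M k :=
  Finsupp.lsum ℕ fun q =>
    LinearMap.toSpanSingleton k (M k) (e k (q.1, q.2 + 1) - (q.1 : k) • e k (q.1 - 1, q.2))

theorem Xop_single (q : ℕ × ℕ) (c : k) :
    Xop k (Finsupp.single q c) = c • e k (q.1 + 1, q.2) := by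
  simp [Xop, Finsupp.lsum_single, LinearMap.toSpanSingleton_apply]

theorem Yop_single (q : ℕ × ℕ) (c : k) :
    Yop k (Finsupp.single q c)
      = c • (e k (q.1, q.2 + 1) - (q.1 : k) • e k (q.1 - 1, q.2)) := by
  simp [Yop, Finsupp.lsum_single, LinearMap.toSpanSingleton_apply]

theorem Xop_e (q : ℕ × ℕ) : Xop k (e k q) = e k (q.1 + 1, q.2) := by
  simpa [e] using Xop_single k q 1

theorem Yop_e (q : ℕ × ℕ) :
    Yop k (e k q) = e k (q.1, q.2 + 1) - (q.1 : k) • e k (q.1 - 1, q.2) := by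
  simpa [e] using Yop_single k q 1

theorem XY_rel : Xop k * Yop k = Yop k * Xop k + 1 := by
  apply Finsupp.lhom_ext
  rintro ⟨m, n⟩ c
  have hsingle : (Finsupp.single (m, n) c : M k) = c • e k (m, n) := by simp [e]
  simp only [Module.End.mul_apply, LinearMap.add_apply, Module.End.one_apply, hsingle,
    map_smul, Xop_e, Yop_e, map_sub]
  cases m with
  | zero => simp
  | succ m =>
      simp only [Nat.add_sub_cancel]
      push_cast
      module

noncomputable def rho : Weyl k →ₐ[k] Module.End k (M k) :=
  RingQuot.liftAlgHom k
    ⟨FreeAlgebra.lift k ![Xop k, Yop k], by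
      rintro a b ⟨⟩
      simp only [map_mul, map_add, map_one, FreeAlgebra.lift_ι_apply]
      show Xop k * Yop k = Yop k * Xop k + 1
      exact XY_rel k⟩

theorem rho_x : rho k x = Xop k := by
  rw [Weyl.x, rho, RingQuot.liftAlgHom_mkAlgHom_apply, FreeAlgebra.lift_ι_apply]
  rfl

theorem rho_y : rho k y = Yop k := by
  rw [Weyl.y, rho, RingQuot.liftAlgHom_mkAlgHom_apply, FreeAlgebra.lift_ι_apply]
  rfl

theorem Yop_pow_e (j : ℕ) : (Yop k ^ j) (e k (0, 0)) = e k (0, j) := by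
  induction j with
  | zero => rfl
  | succ j ih =>
      rw [pow_succ', Module.End.mul_apply, ih, Yop_e]
      simp

theorem Xop_pow_e (i m n : ℕ) : (Xop k ^ i) (e k (m, n)) = e k (m + i, n) := by
  induction i with
  | zero => rfl
  | succ i ih =>
      rw [pow_succ', Module.End.mul_apply, ih, Xop_e]
      rfl

theorem rho_monomial (i j : ℕ) :
    rho k (x ^ i * y ^ j) (e k (0, 0)) = e k (i, j) := by
  rw [map_mul, map_pow, map_pow, rho_x, rho_y, Module.End.mul_apply, Yop_pow_e, Xop_pow_e]
  simp

noncomputable def f (q : ℕ × ℕ) : W := x ^ q.1 * y ^ q.2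

theorem f_li : LinearIndependent k (f k) := by
  apply LinearIndependent.of_comp ((LinearMap.applyₗ (e k (0, 0))).comp (rho k).toLinearMap)
  have hcomp : ⇑((LinearMap.applyₗ (e k (0, 0))).comp (rho k).toLinearMap) ∘ f k
      = fun q : ℕ × ℕ => e k q := by
    funext q
    exact rho_monomial k q.1 q.2
  rw [hcomp]
  have := (Finsupp.basisSingleOne (R := k) (ι := ℕ × ℕ)).linearIndependent
  simpa [e, Finsupp.coe_basisSingleOne] using this

theorem xpow_y (i : ℕ) :
    x ^ (i + 1) * y = y * x ^ (i + 1) + (i + 1) • x ^ i := by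
  induction i with
  | zero => simpa using xy_rel k
  | succ i ih =>
      calc x ^ (i + 2) * y = x * (x ^ (i + 1) * y) := by rw [pow_succ', mul_assoc]
        _ = x * (y * x ^ (i + 1)) + (i + 1) • (x * x ^ i) := by
            rw [ih, mul_add, mul_smul_comm]
        _ = (x * y) * x ^ (i + 1) + (i + 1) • x ^ (i + 1) := by
            rw [← mul_assoc, ← pow_succ']
        _ = y * x ^ (i + 2) + ((i + 1) • x ^ (i + 1) + x ^ (i + 1)) := by
            rw [xy_rel k, add_mul, one_mul, mul_assoc, ← pow_succ']
            abel
        _ = y * x ^ (i + 2) + (i + 2) • x ^ (i + 1) := by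
            conv_rhs => rw [succ_nsmul]

theorem x_ypow (j : ℕ) :
    x * y ^ (j + 1) = y ^ (j + 1) * x + (j + 1) • y ^ j := by
  induction j with
  | zero => simpa using xy_rel k
  | succ j ih =>
      calc x * y ^ (j + 2) = (x * y ^ (j + 1)) * y := by rw [pow_succ, ← mul_assoc]
        _ = y ^ (j + 1) * (x * y) + (j + 1) • (y ^ j * y) := by
            rw [ih, add_mul, smul_mul_assoc, mul_assoc]
        _ = y ^ (j + 1) * (y * x) + ((j + 1) • y ^ (j + 1) + y ^ (j + 1)) := by
            rw [xy_rel k, ← pow_succ, mul_add, mul_one]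
            abel
        _ = y ^ (j + 2) * x + (j + 2) • y ^ (j + 1) := by
            rw [← mul_assoc, ← pow_succ]
            conv_rhs => rw [succ_nsmul]

theorem f_zero_zero : f k (0, 0) = 1 := by simp [f]

theorem x_mul_f (i j : ℕ) : x * f k (i, j) = f k (i + 1, j) := by
  rw [f, f, ← mul_assoc, ← pow_succ']

theorem f_mul_y (i j : ℕ) : f k (i, j) * y = f k (i, j + 1) := by
  rw [f, f, mul_assoc, ← pow_succ]

theorem y_mul_f_zero (j : ℕ) : y * f k (0, j) = f k (0, j + 1) := by
  simp only [f, pow_zero, one_mul]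
  rw [← pow_succ']

theorem y_mul_f (i j : ℕ) :
    y * f k (i + 1, j) = f k (i + 1, j + 1) - (i + 1) • f k (i, j) := by
  have h : y * x ^ (i + 1) = x ^ (i + 1) * y - (i + 1) • x ^ i := by
    rw [xpow_y k i]; abel
  calc y * f k (i + 1, j) = (y * x ^ (i + 1)) * y ^ j := by rw [f, mul_assoc]
    _ = (x ^ (i + 1) * y) * y ^ j - (i + 1) • (x ^ i * y ^ j) := by
        rw [h, sub_mul, smul_mul_assoc]
    _ = f k (i + 1, j + 1) - (i + 1) • f k (i, j) := by
        rw [f, f, mul_assoc, ← pow_succ']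

theorem f_mul_x_zero (i : ℕ) : f k (i, 0) * x = f k (i + 1, 0) := by
  simp only [f, pow_zero, mul_one]
  rw [← pow_succ]

theorem f_mul_x (i j : ℕ) :
    f k (i, j + 1) * x = f k (i + 1, j + 1) - (j + 1) • f k (i, j) := by
  have h : y ^ (j + 1) * x = x * y ^ (j + 1) - (j + 1) • y ^ j := by
    rw [x_ypow k j]; abel
  calc f k (i, j + 1) * x = x ^ i * (y ^ (j + 1) * x) := by rw [f, mul_assoc]
    _ = x ^ i * (x * y ^ (j + 1)) - (j + 1) • (x ^ i * y ^ j) := by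
        rw [h, mul_sub, mul_smul_comm]
    _ = f k (i + 1, j + 1) - (j + 1) • f k (i, j) := by
        rw [f, f, ← mul_assoc, ← pow_succ]

theorem f_span_top : Submodule.span k (Set.range (f k)) = ⊤ := by
  set S := Submodule.span k (Set.range (f k)) with hS
  have hx : ∀ s ∈ S, x * s ∈ S := by
    intro s hs
    induction hs using Submodule.span_induction with
    | mem s hs =>
        obtain ⟨⟨i, j⟩, rfl⟩ := hs
        rw [x_mul_f]
        exact Submodule.subset_span ⟨(i + 1, j), rfl⟩
    | zero => simpa using Submodule.zero_mem S
    | add a b _ _ ha hb => rw [mul_add]; exact add_mem ha hb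
    | smul a u _ hu => rw [mul_smul_comm]; exact Submodule.smul_mem S a hu
  have hy : ∀ s ∈ S, y * s ∈ S := by
    intro s hs
    induction hs using Submodule.span_induction with
    | mem s hs =>
        obtain ⟨⟨i, j⟩, rfl⟩ := hs
        cases i with
        | zero =>
            rw [y_mul_f_zero]
            exact Submodule.subset_span ⟨(0, j + 1), rfl⟩
        | succ i =>
            rw [y_mul_f]
            exact sub_mem (Submodule.subset_span ⟨(i + 1, j + 1), rfl⟩)
              (Submodule.smul_mem S _ (Submodule.subset_span ⟨(i, j), rfl⟩))
    | zero => simpa using Submodule.zero_mem S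
    | add a b _ _ ha hb => rw [mul_add]; exact add_mem ha hb
    | smul a u _ hu => rw [mul_smul_comm]; exact Submodule.smul_mem S a hu
  have key : ∀ w : W, ∀ s ∈ S, w * s ∈ S := by
    intro w
    obtain ⟨a, rfl⟩ := RingQuot.mkAlgHom_surjective k (WeylRel k) w
    induction a using FreeAlgebra.induction with
    | grade0 r =>
        intro s hs
        rw [AlgHom.commutes, ← Algebra.smul_def]
        exact Submodule.smul_mem S r hs
    | grade1 i =>
        fin_cases i
        · exact fun s hs => hx s hs
        · exact fun s hs => hy s hs
    | mul a b ha hb =>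
        intro s hs
        rw [map_mul, mul_assoc]
        exact ha _ (hb s hs)
    | add a b ha hb =>
        intro s hs
        rw [map_add, add_mul]
        exact add_mem (ha s hs) (hb s hs)
  rw [eq_top_iff]
  intro w _
  have := key w _ (Submodule.subset_span ⟨(0, 0), rfl⟩)
  rwa [f_zero_zero, mul_one] at this

theorem central_of_commutes (w : W) (hwx : w * x = x * w) (hwy : w * y = y * w) :
    w ∈ Subalgebra.center k W := by
  rw [Subalgebra.mem_center_iff]
  intro b
  obtain ⟨a, rfl⟩ := RingQuot.mkAlgHom_surjective k (WeylRel k) b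
  induction a using FreeAlgebra.induction with
  | grade0 r => rw [AlgHom.commutes, Algebra.commutes]
  | grade1 i =>
      fin_cases i
      · exact hwx.symm
      · exact hwy.symm
  | mul a b ha hb =>
      rw [map_mul, mul_assoc, hb, ← mul_assoc, ha, mul_assoc]
  | add a b ha hb =>
      rw [map_add, add_mul, mul_add, ha, hb]

variable (p : ℕ) [hpchar : CharP k p]

theorem nsmul_p_eq_zero (w : W) : p • w = 0 := by
  rw [← Nat.cast_smul_eq_nsmul k, CharP.cast_eq_zero k p, zero_smul]

theorem xp_central : (x ^ p : W) ∈ Subalgebra.center k W := by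
  rcases Nat.eq_zero_or_pos p with hp0 | hp0
  · rw [hp0]; simpa using Subalgebra.one_mem _
  have hp1 : p - 1 + 1 = p := Nat.succ_pred_eq_of_pos hp0
  apply central_of_commutes
  · rw [← pow_succ, ← pow_succ']
  · rw [← hp1, xpow_y, hp1, nsmul_p_eq_zero, add_zero]

theorem yp_central : (y ^ p : W) ∈ Subalgebra.center k W := by
  rcases Nat.eq_zero_or_pos p with hp0 | hp0
  · rw [hp0]; simpa using Subalgebra.one_mem _
  have hp1 : p - 1 + 1 = p := Nat.succ_pred_eq_of_pos hp0
  apply central_of_commutes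
  · rw [← hp1, x_ypow, hp1, nsmul_p_eq_zero, add_zero]
  · rw [← pow_succ, ← pow_succ']

theorem ypow_commute_xpow (b i : ℕ) : x ^ i * y ^ (p * b) = y ^ (p * b) * x ^ i := by
  have h : (y ^ (p * b) : W) ∈ Subalgebra.center k W := by
    rw [pow_mul]
    exact Subalgebra.pow_mem _ (yp_central k p) b
  exact Subalgebra.mem_center_iff.mp h (x ^ i)

theorem f_mul_f_of_dvd (m n i j : ℕ) (hn : p ∣ n) :
    f k (m, n) * f k (i, j) = f k (m + i, n + j) := by
  obtain ⟨b, rfl⟩ := hn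
  rw [f, f, f, pow_add, pow_add]
  have := ypow_commute_xpow k p b i
  calc x ^ m * y ^ (p * b) * (x ^ i * y ^ j)
      = x ^ m * (y ^ (p * b) * x ^ i) * y ^ j := by noncomm_ring
    _ = x ^ m * (x ^ i * y ^ (p * b)) * y ^ j := by rw [← this]
    _ = x ^ m * x ^ i * (y ^ (p * b) * y ^ j) := by noncomm_ring

noncomputable def bk : Module.Basis (ℕ × ℕ) k W := Module.Basis.mk (f_li k) (f_span_top k).ge

theorem bk_apply (q : ℕ × ℕ) : bk k q = f k q := Module.Basis.mk_apply _ _ _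

theorem bk_repr_f (q : ℕ × ℕ) : (bk k).repr (f k q) = Finsupp.single q 1 := by
  rw [← bk_apply, Module.Basis.repr_self]

theorem Dy_f (q : ℕ × ℕ) :
    f k q * y - y * f k q = ((q.1 : ℕ) : k) • f k (q.1 - 1, q.2) := by
  obtain ⟨i, j⟩ := q
  cases i with
  | zero => simp [f_mul_y, y_mul_f_zero]
  | succ i =>
      rw [f_mul_y, y_mul_f]
      simp only [Nat.add_sub_cancel]
      rw [Nat.cast_smul_eq_nsmul]
      abel

theorem Dx_f (q : ℕ × ℕ) :
    x * f k q - f k q * x = ((q.2 : ℕ) : k) • f k (q.1, q.2 - 1) := by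
  obtain ⟨i, j⟩ := q
  cases j with
  | zero => simp [x_mul_f, f_mul_x_zero]
  | succ j =>
      rw [x_mul_f, f_mul_x]
      simp only [Nat.add_sub_cancel]
      rw [Nat.cast_smul_eq_nsmul]
      abel

/-- generic coefficient extraction -/
theorem extraction (g : (ℕ × ℕ) →₀ k) (t : ℕ × ℕ → ℕ × ℕ) (w : ℕ × ℕ → k)
    (h0 : Finsupp.sum g (fun q a => (a * w q) • Finsupp.single (t q) (1 : k)) = 0)
    (q₀ : ℕ × ℕ) (huniq : ∀ q, t q = t q₀ → q ≠ q₀ → w q = 0) :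
    g q₀ * w q₀ = 0 := by
  have := DFunLike.congr_fun h0 (t q₀)
  rw [Finsupp.sum_apply, Finsupp.coe_zero, Pi.zero_apply, Finsupp.sum] at this
  rcases eq_or_ne (g q₀) 0 with hg | hg
  · rw [hg, zero_mul]
  have hmem : q₀ ∈ g.support := Finsupp.mem_support_iff.mpr hg
  have hsum : ∑ q ∈ g.support, ((g q * w q) • Finsupp.single (t q) (1 : k)) (t q₀)
      = g q₀ * w q₀ := by
    rw [Finset.sum_eq_single q₀]
    · simp [Finsupp.single_apply]
    · intro q _ hqne
      rcases eq_or_ne (t q) (t q₀) with ht | ht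
      · rw [huniq q ht hqne]
        simp
      · simp [Finsupp.single_apply, ht]
    · intro habs
      exact absurd hmem habs
  rw [hsum] at this
  exact this

theorem center_repr_dvd (c : W) (hc : c ∈ Subalgebra.center k W) (m n : ℕ)
    (h : (bk k).repr c (m, n) ≠ 0) : p ∣ m ∧ p ∣ n := by
  set g := (bk k).repr c with hg
  have hrep : c = Finsupp.sum g (fun q a => a • f k q) := by
    conv_lhs => rw [← (bk k).linearCombination_repr c]
    rw [Finsupp.linearCombination_apply]
    exact Finsupp.sum_congr fun q _ => by rw [bk_apply]
  -- first coordinate, using right/left mult by y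
  have hdvd1 : p ∣ m := by
    rcases Nat.eq_zero_or_pos m with h0 | h0
    · exact h0 ▸ dvd_zero p
    set D : W →ₗ[k] W := LinearMap.mulRight k y - LinearMap.mulLeft k y with hD
    have hDf : ∀ q : ℕ × ℕ, D (f k q) = ((q.1 : ℕ) : k) • f k (q.1 - 1, q.2) := by
      intro q
      simpa [hD, LinearMap.sub_apply, LinearMap.mulRight_apply, LinearMap.mulLeft_apply]
        using Dy_f k q
    have hDc : D c = 0 := by
      simp only [hD, LinearMap.sub_apply, LinearMap.mulRight_apply, LinearMap.mulLeft_apply]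
      rw [Subalgebra.mem_center_iff] at hc
      rw [hc y, sub_self]
    have h0' : Finsupp.sum g
        (fun q a => (a * ((q.1 : ℕ) : k)) • Finsupp.single (q.1 - 1, q.2) (1 : k)) = 0 := by
      have : (bk k).repr (D c) = Finsupp.sum g
          (fun q a => (a * ((q.1 : ℕ) : k)) • Finsupp.single (q.1 - 1, q.2) (1 : k)) := by
        conv_lhs => rw [hrep, map_finsuppSum, map_finsuppSum]
        refine Finsupp.sum_congr fun q _ => ?_
        simp only [map_smul, hDf, bk_repr_f, smul_smul]
      rw [← this, hDc, map_zero]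
    have hext := extraction k g (fun q => (q.1 - 1, q.2)) (fun q => ((q.1 : ℕ) : k)) h0'
      (m, n) ?huniq
    · have : ((m : ℕ) : k) = 0 := by
        rcases mul_eq_zero.mp hext with h' | h'
        · exact absurd h' h
        · exact h'
      exact (CharP.cast_eq_zero_iff k p m).mp this
    · intro q hq hqne
      have : q.1 = 0 := by
        have h1 : q.1 - 1 = m - 1 := congrArg Prod.fst hq
        have h2 : q.2 = n := congrArg Prod.snd hq
        by_contra hq1
        apply hqne
        have : q.1 = m := by omega
        exact Prod.ext this h2
      simp [this]
  have hdvd2 : p ∣ n := by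
    rcases Nat.eq_zero_or_pos n with h0 | h0
    · exact h0 ▸ dvd_zero p
    set D : W →ₗ[k] W := LinearMap.mulLeft k x - LinearMap.mulRight k x with hD
    have hDf : ∀ q : ℕ × ℕ, D (f k q) = ((q.2 : ℕ) : k) • f k (q.1, q.2 - 1) := by
      intro q
      simpa [hD, LinearMap.sub_apply, LinearMap.mulRight_apply, LinearMap.mulLeft_apply]
        using Dx_f k q
    have hDc : D c = 0 := by
      simp only [hD, LinearMap.sub_apply, LinearMap.mulRight_apply, LinearMap.mulLeft_apply]
      rw [Subalgebra.mem_center_iff] at hc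
      rw [hc x, sub_self]
    have h0' : Finsupp.sum g
        (fun q a => (a * ((q.2 : ℕ) : k)) • Finsupp.single (q.1, q.2 - 1) (1 : k)) = 0 := by
      have : (bk k).repr (D c) = Finsupp.sum g
          (fun q a => (a * ((q.2 : ℕ) : k)) • Finsupp.single (q.1, q.2 - 1) (1 : k)) := by
        conv_lhs => rw [hrep, map_finsuppSum, map_finsuppSum]
        refine Finsupp.sum_congr fun q _ => ?_
        simp only [map_smul, hDf, bk_repr_f, smul_smul]
      rw [← this, hDc, map_zero]
    have hext := extraction k g (fun q => (q.1, q.2 - 1)) (fun q => ((q.2 : ℕ) : k)) h0'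
      (m, n) ?huniq2
    · have : ((n : ℕ) : k) = 0 := by
        rcases mul_eq_zero.mp hext with h' | h'
        · exact absurd h' h
        · exact h'
      exact (CharP.cast_eq_zero_iff k p n).mp this
    case huniq2 =>
      intro q hq hqne
      have : q.2 = 0 := by
        have h1 : q.1 = m := congrArg Prod.fst hq
        have h2 : q.2 - 1 = n - 1 := congrArg Prod.snd hq
        by_contra hq2
        apply hqne
        have : q.2 = n := by omega
        exact Prod.ext h1 this
      simp [this]
  exact ⟨hdvd1, hdvd2⟩

theorem subalg_smul_def {C : Subalgebra k W} (c : ↥C) (w : W) : c • w = (c : W) * w := by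
  rw [Subalgebra.smul_def, smul_eq_mul]

/-- Lemma L : coefficients of a central element times a monomial. -/
theorem repr_central_mul (hp0 : 0 < p) (w : W) (hw : w ∈ Subalgebra.center k W)
    (i j : ℕ) (hi : i < p) (hj : j < p) (M N : ℕ) :
    (bk k).repr (w * f k (i, j)) (M, N) =
      if M % p = i ∧ N % p = j then (bk k).repr w (M - i, N - j) else 0 := by
  set g := (bk k).repr w with hg
  have hsupp : ∀ q ∈ g.support, p ∣ q.1 ∧ p ∣ q.2 := by
    intro q hq
    exact center_repr_dvd k p w hw q.1 q.2 (by simpa using Finsupp.mem_support_iff.mp hq)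
  have hrep : w = Finsupp.sum g (fun q a => a • f k q) := by
    conv_lhs => rw [← (bk k).linearCombination_repr w]
    rw [Finsupp.linearCombination_apply]
    exact Finsupp.sum_congr fun q _ => by rw [bk_apply]
  have hmul : w * f k (i, j) = Finsupp.sum g (fun q a => a • f k (q.1 + i, q.2 + j)) := by
    rw [hrep, Finsupp.sum_mul]
    refine Finsupp.sum_congr fun q hq => ?_
    rw [smul_mul_assoc, f_mul_f_of_dvd k p _ _ _ _ (hsupp q hq).2]
  have hrepr : (bk k).repr (w * f k (i, j)) =
      Finsupp.sum g (fun q a => a • Finsupp.single (q.1 + i, q.2 + j) (1 : k)) := by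
    rw [hmul, map_finsuppSum]
    exact Finsupp.sum_congr fun q _ => by rw [map_smul, bk_repr_f]
  rw [hrepr, Finsupp.sum_apply, Finsupp.sum]
  by_cases hcond : M % p = i ∧ N % p = j
  · rw [if_pos hcond]
    obtain ⟨hcm, hcn⟩ := hcond
    have hMi : i ≤ M := hcm ▸ Nat.mod_le M p
    have hNj : j ≤ N := hcn ▸ Nat.mod_le N p
    rw [Finset.sum_eq_single (M - i, N - j)]
    · rw [Finsupp.smul_apply, Finsupp.single_apply, if_pos (by
        apply Prod.ext <;> simp <;> omega), smul_eq_mul, mul_one]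
    · intro q _ hqne
      rw [Finsupp.smul_apply, Finsupp.single_apply, if_neg, smul_zero]
      intro habs
      apply hqne
      have h1 : q.1 + i = M := congrArg Prod.fst habs
      have h2 : q.2 + j = N := congrArg Prod.snd habs
      exact Prod.ext (by omega) (by omega)
    · intro hnot
      rw [Finsupp.notMem_support_iff.mp hnot, zero_smul, Finsupp.coe_zero, Pi.zero_apply]
  · rw [if_neg hcond]
    apply Finset.sum_eq_zero
    intro q hq
    rw [Finsupp.smul_apply, Finsupp.single_apply, if_neg, smul_zero]
    intro habs
    apply hcond
    have h1 : q.1 + i = M := congrArg Prod.fst habs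
    have h2 : q.2 + j = N := congrArg Prod.snd habs
    obtain ⟨u, hu⟩ := (hsupp q hq).1
    obtain ⟨v, hv⟩ := (hsupp q hq).2
    constructor
    · rw [← h1, hu, Nat.mul_add_mod, Nat.mod_eq_of_lt hi]
    · rw [← h2, hv, Nat.mul_add_mod, Nat.mod_eq_of_lt hj]

noncomputable def cab (a b : ℕ) : ↥(Subalgebra.center k W) :=
  ⟨x ^ (p * a) * y ^ (p * b),
    mul_mem (by rw [pow_mul]; exact pow_mem (xp_central k p) a)
      (by rw [pow_mul]; exact pow_mem (yp_central k p) b)⟩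

theorem cab_smul (a b i j : ℕ) :
    cab k p a b • f k (i, j) = f k (p * a + i, p * b + j) := by
  rw [subalg_smul_def]
  show (x ^ (p * a) * y ^ (p * b)) * f k (i, j) = _
  rw [show (x ^ (p * a) * y ^ (p * b) : W) = f k (p * a, p * b) from rfl,
    f_mul_f_of_dvd k p (p * a) (p * b) i j (dvd_mul_right p b)]

noncomputable def gb : Fin p × Fin p → W := fun q => f k ((q.1 : ℕ), (q.2 : ℕ))

theorem gb_span (hp0 : 0 < p) :
    Submodule.span ↥(Subalgebra.center k W) (Set.range (gb k p)) = ⊤ := by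
  rw [eq_top_iff]
  intro w _
  have hw : w ∈ Submodule.span k (Set.range (f k)) := by rw [f_span_top]; trivial
  have hle : Submodule.span k (Set.range (f k)) ≤
      (Submodule.span ↥(Subalgebra.center k W) (Set.range (gb k p))).restrictScalars k := by
    rw [Submodule.span_le]
    rintro _ ⟨⟨m, n⟩, rfl⟩
    have hdecomp : f k (m, n) =
        cab k p (m / p) (n / p) • gb k p (⟨m % p, Nat.mod_lt _ hp0⟩, ⟨n % p, Nat.mod_lt _ hp0⟩) := by
      rw [show gb k p (⟨m % p, Nat.mod_lt _ hp0⟩, ⟨n % p, Nat.mod_lt _ hp0⟩)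
          = f k (m % p, n % p) from rfl, cab_smul]
      rw [Nat.div_add_mod, Nat.div_add_mod]
    rw [hdecomp]
    show _ ∈ (Submodule.span ↥(Subalgebra.center k W) (Set.range (gb k p))).restrictScalars k
    rw [Submodule.restrictScalars_mem]
    exact Submodule.smul_mem _ _ (Submodule.subset_span (Set.mem_range_self _))
  exact hle hw

set_option maxHeartbeats 1000000 in
theorem gb_li (hp0 : 0 < p) :
    LinearIndependent ↥(Subalgebra.center k W) (gb k p) := by
  refine (linearIndependent_iff' (R := ↥(Subalgebra.center k W)) (v := gb k p)).mpr
    fun s coef hsum q₀ hq₀ => ?_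
  have hrepr0 : ∀ M N : ℕ, (bk k).repr ↑(coef q₀) (M, N) = 0 := by
    intro M N
    by_cases hd : p ∣ M ∧ p ∣ N
    · obtain ⟨⟨a, rfl⟩, ⟨b, rfl⟩⟩ := hd
      have h := DFunLike.congr_fun (congrArg (bk k).repr hsum)
        (p * a + (q₀.1 : ℕ), p * b + (q₀.2 : ℕ))
      rw [map_zero, map_sum, Finsupp.coe_zero, Pi.zero_apply, Finsupp.finset_sum_apply] at h
      have hterm : ∀ q ∈ s, q ≠ q₀ →
          (bk k).repr (coef q • gb k p q) (p * a + (q₀.1 : ℕ), p * b + (q₀.2 : ℕ)) = 0 := by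
        intro q _ hqne
        rw [subalg_smul_def, show gb k p q = f k ((q.1 : ℕ), (q.2 : ℕ)) from rfl,
          repr_central_mul k p hp0 _ (coef q).2 _ _ q.1.isLt q.2.isLt, if_neg]
        intro habs
        apply hqne
        obtain ⟨h1, h2⟩ := habs
        rw [Nat.mul_add_mod, Nat.mod_eq_of_lt q₀.1.isLt] at h1
        rw [Nat.mul_add_mod, Nat.mod_eq_of_lt q₀.2.isLt] at h2
        exact Prod.ext (Fin.ext h1.symm) (Fin.ext h2.symm)
      rw [Finset.sum_eq_single q₀ hterm (fun habs => absurd hq₀ habs)] at h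
      rw [subalg_smul_def, show gb k p q₀ = f k ((q₀.1 : ℕ), (q₀.2 : ℕ)) from rfl,
        repr_central_mul k p hp0 _ (coef q₀).2 _ _ q₀.1.isLt q₀.2.isLt, if_pos] at h
      · simpa using h
      · constructor
        · rw [Nat.mul_add_mod, Nat.mod_eq_of_lt q₀.1.isLt]
        · rw [Nat.mul_add_mod, Nat.mod_eq_of_lt q₀.2.isLt]
    · by_contra hne
      exact hd (center_repr_dvd k p _ (coef q₀).2 M N hne)
  have hzero : (bk k).repr ↑(coef q₀) = 0 := by
    ext q
    obtain ⟨M, N⟩ := q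
    simpa using hrepr0 M N
  exact Subtype.ext ((bk k).repr.map_eq_zero_iff.mp hzero)

end WeylPf

set_option maxHeartbeats 4000000 in
theorem weyl_free_over_center (k : Type*) [Field k]
    (p : ℕ) (hp : p.Prime) [CharP k p] :
    ∃ b : Module.Basis (Fin p × Fin p) (Subalgebra.center k (Weyl k)) (Weyl k),
      ∀ ij : Fin p × Fin p,
        b ij = Weyl.x k ^ (ij.1 : ℕ) * Weyl.y k ^ (ij.2 : ℕ) := by
  have hpos : 0 < p := hp.pos
  have hli := WeylPf.gb_li k p hpos
  have hsp : ⊤ ≤ Submodule.span ↥(Subalgebra.center k (Weyl k))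
      (Set.range (WeylPf.gb k p)) := (WeylPf.gb_span k p hpos).ge
  refine ⟨Module.Basis.mk (ι := Fin p × Fin p) (R := ↥(Subalgebra.center k (Weyl k))) (M := Weyl k)
      (v := WeylPf.gb k p) hli hsp, fun ij => ?_⟩
  rw [Module.Basis.mk_apply]
  rfl
end

section
/- Let L ∈ M_r(k) be nilpotent. Then there exists a nilpotent M ∈ M_r(k) commuting with L such that the commutative algebra T = k[L,M] makes the natural module k^r a cyclic T-module. -/
open Polynomial Module Submodule

noncomputable section

namespace CyclicAux

variable (k : Type*) [Field k]

abbrev Q (e : ℕ) : Type _ := k[X] ⧸ (span k[X] {(X : k[X]) ^ e} : Submodule k[X] k[X])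

def pim (a b : ℕ) (h : b ≤ a) : Q k a →ₗ[k[X]] Q k b :=
  Submodule.mapQ _ _ LinearMap.id (by
    intro x hx
    simp only [Submodule.mem_comap, LinearMap.id_coe, id_eq]
    rw [Submodule.mem_span_singleton] at hx ⊢
    obtain ⟨c, rfl⟩ := hx
    exact ⟨c * X ^ (a - b), by rw [smul_eq_mul, smul_eq_mul, mul_assoc, ← pow_add,
      Nat.sub_add_cancel h]⟩)

lemma pim_mk (a b : ℕ) (h : b ≤ a) (q : k[X]) :
    pim k a b h (Submodule.Quotient.mk q) = Submodule.Quotient.mk q := rfl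

variable (e : ℕ → ℕ) (he : ∀ i, e (i + 1) ≤ e i)

abbrev W : Type _ := ∀ i : ℕ, Q k (e i)

def gmap : W k e →ₗ[k[X]] W k e :=
  LinearMap.pi fun i =>
    match i with
    | 0 => 0
    | (j + 1) => (pim k (e j) (e (j + 1)) (he j)).comp (LinearMap.proj j)

lemma gmap_apply_zero (w : W k e) : gmap k e he w 0 = 0 := rfl

lemma gmap_apply_succ (w : W k e) (j : ℕ) :
    gmap k e he w (j + 1) = pim k (e j) (e (j + 1)) (he j) (w j) := rfl

lemma gmap_single (j : ℕ) (q : k[X]) :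
    gmap k e he (Pi.single j (Submodule.Quotient.mk q)) =
      Pi.single (j + 1) (Submodule.Quotient.mk q) := by
  classical
  funext i
  match i with
  | 0 =>
    rw [gmap_apply_zero, Pi.single_eq_of_ne (by omega)]
  | (i + 1) =>
    rw [gmap_apply_succ]
    rcases eq_or_ne i j with rfl | hij
    · rw [Pi.single_eq_same, Pi.single_eq_same, pim_mk]
    · rw [Pi.single_eq_of_ne hij, Pi.single_eq_of_ne (by omega), map_zero]

lemma gmap_pow_single (a j : ℕ) (q : k[X]) :
    (gmap k e he ^ a) (Pi.single j (Submodule.Quotient.mk q)) =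
      Pi.single (j + a) (Submodule.Quotient.mk q) := by
  induction a generalizing j with
  | zero => simp
  | succ a ih =>
    rw [pow_succ', Module.End.mul_apply, ih, gmap_single]
    rfl

lemma gmap_pow_apply_eq_zero (a : ℕ) (w : W k e) (i : ℕ) (hi : i < a) :
    (gmap k e he ^ a) w i = 0 := by
  induction a generalizing w i with
  | zero => omega
  | succ a ih =>
    rw [pow_succ', Module.End.mul_apply]
    match i with
    | 0 => rw [gmap_apply_zero]
    | (i + 1) => rw [gmap_apply_succ, ih w i (by omega), map_zero]

lemma subsingleton_Q_zero (i : ℕ) (hi : e i = 0) : Subsingleton (Q k (e i)) := by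
  rw [Submodule.Quotient.subsingleton_iff, hi, pow_zero, Submodule.eq_top_iff']
  intro x
  rw [Submodule.mem_span_singleton]
  exact ⟨x, by rw [smul_eq_mul, mul_one]⟩

lemma gmap_pow_eq_zero (m : ℕ) (hm : ∀ i, m ≤ i → e i = 0) : gmap k e he ^ m = 0 := by
  ext w i
  simp only [LinearMap.zero_apply, Pi.zero_apply]
  rcases lt_or_ge i m with hi | hi
  · exact gmap_pow_apply_eq_zero k e he m w i hi
  · haveI := subsingleton_Q_zero k e i (hm i hi)
    exact Subsingleton.elim _ _


def gens : Set (W k e) :=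
  {x | ∃ a b : ℕ, x = Pi.single a (Submodule.Quotient.mk ((X : k[X]) ^ b))}

lemma span_gens_eq_top (m : ℕ) (hm : ∀ i, m ≤ i → e i = 0) :
    Submodule.span k (gens k e) = ⊤ := by
  rw [Submodule.eq_top_iff']
  intro w
  have hsingle : ∀ (i : ℕ) (y : Q k (e i)),
      Pi.single i y ∈ Submodule.span k (gens k e) := by
    intro i y
    obtain ⟨q, rfl⟩ := Submodule.Quotient.mk_surjective _ y
    induction q using Polynomial.induction_on' with
    | add p q hp hq =>
      rw [Submodule.Quotient.mk_add, Pi.single_add]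
      exact add_mem hp hq
    | monomial n a =>
      have h1 : (Pi.single i (Submodule.Quotient.mk ((X : k[X]) ^ n)) : W k e) ∈
          Submodule.span k (gens k e) := Submodule.subset_span ⟨i, n, rfl⟩
      set y : W k e := Pi.single i (Submodule.Quotient.mk ((X : k[X]) ^ n)) with hy
      have hsm : (Pi.single i (a • Submodule.Quotient.mk ((X : k[X]) ^ n)) : W k e) =
          a • y := by
        rw [hy]
        funext j
        rcases eq_or_ne j i with rfl | hne
        · rw [Pi.smul_apply, Pi.single_eq_same, Pi.single_eq_same]
        · rw [Pi.smul_apply, Pi.single_eq_of_ne hne, Pi.single_eq_of_ne hne, smul_zero]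
      rw [← smul_X_eq_monomial, Submodule.Quotient.mk_smul, hsm]
      exact Submodule.smul_mem _ _ h1
  have hw : w = ∑ i ∈ Finset.range m, Pi.single i (w i) := by
    funext j
    rw [Finset.sum_apply]
    symm
    rcases lt_or_ge j m with hj | hj
    · rw [Finset.sum_eq_single_of_mem j (Finset.mem_range.mpr hj)]
      · exact Pi.single_eq_same (M := fun i => Q k (e i)) j (w j)
      · exact fun i _ hij => Pi.single_eq_of_ne (M := fun i => Q k (e i)) (Ne.symm hij) (w i)
    · haveI := subsingleton_Q_zero k e j (hm j hj)
      exact Subsingleton.elim _ _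
  rw [hw]
  exact Submodule.sum_mem _ fun i _ => hsingle i (w i)

def epad (m : ℕ) (c : Fin m → ℕ) : ℕ → ℕ := fun i => if h : i < m then c ⟨i, h⟩ else 0

lemma quot_quot (p q : Submodule k[X] k[X]) (h : p = q) (h' : q = p) (y : k[X] ⧸ p) :
    Submodule.quotEquivOfEq q p h' (Submodule.quotEquivOfEq p q h y) = y := by
  obtain ⟨x, rfl⟩ := Submodule.Quotient.mk_surjective _ y
  rw [Submodule.quotEquivOfEq_mk, Submodule.quotEquivOfEq_mk]

def tproj (m : ℕ) (c : Fin m → ℕ) (j : Fin m) :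
    (∀ j : Fin m, Q k (c j)) →ₗ[k[X]] Q k (c j) :=
  LinearMap.proj j

def tcomp (m : ℕ) (c : Fin m → ℕ) (i : ℕ) (h : i < m) :
    Q k (c ⟨i, h⟩) ≃ₗ[k[X]] Q k (epad m c i) :=
  Submodule.quotEquivOfEq _ _ (by simp [epad, h])
def tF1 (m : ℕ) (c : Fin m → ℕ) (i : ℕ) (h : i < m) :
    (∀ j : Fin m, Q k (c j)) →ₗ[k[X]] Q k (epad m c i) :=
  (tcomp k m c i h).toLinearMap.comp (tproj k m c ⟨i, h⟩)
def tFc (m : ℕ) (c : Fin m → ℕ) (i : ℕ) :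
    (∀ j : Fin m, Q k (c j)) →ₗ[k[X]] Q k (epad m c i) :=
  if h : i < m then tF1 k m c i h else 0
def tF (m : ℕ) (c : Fin m → ℕ) :
    (∀ j : Fin m, Q k (c j)) →ₗ[k[X]] ∀ i : ℕ, Q k (epad m c i) :=
  LinearMap.pi (tFc k m c)
def tGc (m : ℕ) (c : Fin m → ℕ) (j : Fin m) :
    (∀ i : ℕ, Q k (epad m c i)) →ₗ[k[X]] Q k (c j) :=
  (Submodule.quotEquivOfEq _ _ (by simp [epad, j.isLt]) :
    Q k (epad m c (j : ℕ)) ≃ₗ[k[X]] Q k (c j)).toLinearMap.comp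
    (LinearMap.proj (φ := fun i : ℕ => Q k (epad m c i)) (j : ℕ))
def tG (m : ℕ) (c : Fin m → ℕ) :
    (∀ i : ℕ, Q k (epad m c i)) →ₗ[k[X]] ∀ j : Fin m, Q k (c j) :=
  LinearMap.pi (tGc k m c)
lemma subsingleton_Q_zero' (t : ℕ) (ht : t = 0) : Subsingleton (Q k t) := by
  rw [Submodule.Quotient.subsingleton_iff, ht, pow_zero, Submodule.eq_top_iff']
  intro x
  rw [Submodule.mem_span_singleton]
  exact ⟨x, by rw [smul_eq_mul, mul_one]⟩

def padEquiv (m : ℕ) (c : Fin m → ℕ) :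
    (∀ j : Fin m, Q k (c j)) ≃ₗ[k[X]] ∀ i : ℕ, Q k (epad m c i) := by
  refine LinearEquiv.ofLinear (tF k m c) (tG k m c)
    (LinearMap.ext fun u => funext fun i => ?_) (LinearMap.ext fun w => funext fun j => ?_)
  · show tF k m c (tG k m c u) i = u i
    rw [show tF k m c (tG k m c u) i = tFc k m c i (tG k m c u) from rfl]
    by_cases h : i < m
    · rw [tFc, dif_pos h]
      show (tcomp k m c i h) ((tG k m c u) ⟨i, h⟩) = u i
      rw [show (tG k m c u) ⟨i, h⟩ = tGc k m c ⟨i, h⟩ u from rfl]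
      exact quot_quot k _ _ (by simp [epad, h]) (by simp [epad, h]) (u i)
    · rw [tFc, dif_neg h]
      haveI := subsingleton_Q_zero' k (epad m c i) (dif_neg h)
      exact Subsingleton.elim _ _
  · show tG k m c (tF k m c w) j = w j
    rw [show tG k m c (tF k m c w) j = tGc k m c j (tF k m c w) from rfl]
    show (Submodule.quotEquivOfEq _ _ (by simp [epad, j.isLt]) :
      Q k (epad m c (j : ℕ)) ≃ₗ[k[X]] Q k (c j)) ((tF k m c w) (j : ℕ)) = w j
    rw [show (tF k m c w) (j : ℕ) = tFc k m c (j : ℕ) w from rfl,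
      show tFc k m c (j : ℕ) = tF1 k m c (j : ℕ) j.isLt from dif_pos j.isLt]
    exact quot_quot k _ _ (by simp [epad, j.isLt]) (by simp [epad, j.isLt]) (w j)


end CyclicAux

open CyclicAux in
universe u in
set_option maxHeartbeats 1000000 in
theorem key {k : Type u} [Field k] {V : Type u} [AddCommGroup V] [Module k V] [FiniteDimensional k V]
    (f : V →ₗ[k] V) (hf : IsNilpotent f) :
    ∃ g : V →ₗ[k] V, IsNilpotent g ∧ f * g = g * f ∧
      ∃ v : V, ∀ w : V, ∃ t ∈ Algebra.adjoin k {f, g}, t v = w := by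
  classical
  obtain ⟨n, hn⟩ := hf
  -- X^n kills the AEval' module
  have hXn : ∀ x : Module.AEval' f, (X : k[X]) ^ n • x = 0 := by
    intro x
    obtain ⟨m0, rfl⟩ := (Module.AEval'.of f).surjective x
    rw [← Module.AEval.of_aeval_smul]
    simp [hn]
  have htor : Module.IsTorsion k[X] (Module.AEval' f) := fun x =>
    ⟨⟨(X : k[X]) ^ n, mem_nonZeroDivisors_of_ne_zero (pow_ne_zero n X_ne_zero)⟩, hXn x⟩
  obtain ⟨ι, hι, p, hp, eexp, ⟨iso⟩⟩ := Module.equiv_directSum_of_isTorsion htor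
  haveI := hι
  let isoP : Module.AEval' f ≃ₗ[k[X]]
      ∀ i : ι, k[X] ⧸ (span k[X] {p i ^ eexp i} : Submodule k[X] k[X]) :=
    iso.trans (DirectSum.linearEquivFunOnFintype k[X] ι _)
  have hspan : ∀ i : ι, (span k[X] {p i ^ eexp i} : Submodule k[X] k[X]) =
      span k[X] {(X : k[X]) ^ eexp i} := by
    intro i
    rcases Nat.eq_zero_or_pos (eexp i) with h0 | hpos
    · rw [h0, pow_zero, pow_zero]
    · have h2 : (X : k[X]) ^ n •
          (Pi.single i (Submodule.Quotient.mk 1) :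
            ∀ i : ι, k[X] ⧸ (span k[X] {p i ^ eexp i} : Submodule k[X] k[X])) = 0 := by
        have h1 := congrArg isoP (hXn (isoP.symm (Pi.single i (Submodule.Quotient.mk 1))))
        rwa [map_smul, isoP.apply_symm_apply, map_zero] at h1
      have h3 := congrFun h2 i
      rw [Pi.smul_apply, Pi.single_eq_same, Pi.zero_apply, ← Submodule.Quotient.mk_smul,
        smul_eq_mul, mul_one] at h3
      have hx : (X : k[X]) ^ n ∈ (span k[X] {p i ^ eexp i} : Submodule k[X] k[X]) :=
        (Submodule.Quotient.mk_eq_zero _).mp h3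
      rw [Submodule.mem_span_singleton] at hx
      obtain ⟨cc, hcc⟩ := hx
      have hdvd : p i ∣ (X : k[X]) ^ n :=
        dvd_trans (dvd_pow_self (p i) hpos.ne') ⟨cc, by rw [← hcc, smul_eq_mul, mul_comm]⟩
      have hdvdX : p i ∣ (X : k[X]) := (hp i).prime.dvd_of_dvd_pow hdvd
      have hassoc : Associated (p i) (X : k[X]) :=
        (hp i).associated_of_dvd Polynomial.irreducible_X hdvdX
      exact Ideal.span_singleton_eq_span_singleton.mpr (hassoc.pow_pow)
  let isoQ : Module.AEval' f ≃ₗ[k[X]] ∀ i : ι, Q k (eexp i) :=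
    isoP.trans (LinearEquiv.piCongrRight fun i => Submodule.quotEquivOfEq _ _ (hspan i))
  -- sort the exponents
  let m := Fintype.card ι
  let σ0 : Fin m ≃ ι := (Fintype.equivFin ι).symm
  let e1 : Fin m → ℕ := fun j => eexp (σ0 j)
  let τ : Equiv.Perm (Fin m) := Tuple.sort e1
  let σ : Fin m ≃ ι := (Fin.revPerm.trans τ).trans σ0
  let c : Fin m → ℕ := fun j => eexp (σ j)
  have hc : ∀ (j1 j2 : Fin m), j1 ≤ j2 → c j2 ≤ c j1 := by
    intro j1 j2 h
    exact Tuple.monotone_sort e1 (Fin.rev_le_rev.mpr h)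
  let eN : ℕ → ℕ := epad m c
  have heN : ∀ i, eN (i + 1) ≤ eN i := by
    intro i
    by_cases h : i + 1 < m
    · have hi : i < m := by omega
      show epad m c (i + 1) ≤ epad m c i
      rw [epad, epad]
      simp only [dif_pos h, dif_pos hi]
      exact hc ⟨i, hi⟩ ⟨i + 1, h⟩ (by simp [Fin.le_def])
    · show epad m c (i + 1) ≤ epad m c i
      rw [epad]
      simp [h]
  have hm0 : ∀ i, m ≤ i → eN i = 0 := fun i hi => dif_neg (by omega)
  let isoσ : (∀ i : ι, Q k (eexp i)) ≃ₗ[k[X]] ∀ j : Fin m, Q k (c j) :=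
    (LinearEquiv.piCongrLeft k[X] (fun i : ι => Q k (eexp i)) σ).symm
  let ψR : Module.AEval' f ≃ₗ[k[X]] W k eN :=
    isoQ.trans (isoσ.trans (padEquiv k m c))
  let ψ : V ≃ₗ[k] W k eN :=
    (Module.AEval'.of f).trans (ψR.restrictScalars k)
  let gW : W k eN →ₗ[k[X]] W k eN := gmap k eN heN
  let g : V →ₗ[k] V :=
    (ψ.symm.toLinearMap).comp ((gW.restrictScalars k).comp ψ.toLinearMap)
  have hψg : ∀ x : V, ψ (g x) = gW (ψ x) := by
    intro x
    show ψ (ψ.symm (gW (ψ x))) = gW (ψ x)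
    rw [LinearEquiv.apply_symm_apply]
  have hψf : ∀ x : V, ψ (f x) = (X : k[X]) • ψ x := by
    intro x
    show ψR ((Module.AEval'.of f) (f x)) = (X : k[X]) • ψR ((Module.AEval'.of f) x)
    rw [← Module.AEval'.X_smul_of, map_smul]
  have hgdef : ∀ x : V, g x = ψ.symm (gW (ψ x)) := fun x => rfl
  have hcomm : f * g = g * f := by
    apply LinearMap.ext
    intro x
    apply ψ.injective
    rw [Module.End.mul_apply, Module.End.mul_apply, hψf, hψg, hψg, hψf, map_smul]
  have hgpow : ∀ (a : ℕ) (x : V), (g ^ a) x = ψ.symm ((gW ^ a) (ψ x)) := by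
    intro a
    induction a with
    | zero => intro x; simp
    | succ a ih =>
      intro x
      rw [pow_succ', Module.End.mul_apply, ih, hgdef, pow_succ', Module.End.mul_apply,
        LinearEquiv.apply_symm_apply]
  have hgnil : IsNilpotent g := by
    refine ⟨m, ?_⟩
    apply LinearMap.ext
    intro x
    rw [hgpow, gmap_pow_eq_zero k eN heN m hm0]
    simp
  have hfpow : ∀ (b : ℕ) (x : V), ψ ((f ^ b) x) = (X : k[X]) ^ b • ψ x := by
    intro b
    induction b with
    | zero => intro x; simp
    | succ b ih =>
      intro x
      rw [pow_succ', Module.End.mul_apply, hψf, ih, pow_succ', mul_smul]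
  refine ⟨g, hgnil, hcomm, ψ.symm (Pi.single 0 (Submodule.Quotient.mk 1)), ?_⟩
  intro w
  set v : V := ψ.symm (Pi.single 0 (Submodule.Quotient.mk 1)) with hv
  have hgen : ∀ a b : ℕ, ((f ^ b) * (g ^ a)) v =
      ψ.symm (Pi.single a (Submodule.Quotient.mk ((X : k[X]) ^ b))) := by
    intro a b
    apply ψ.injective
    rw [Module.End.mul_apply, hfpow, hgpow, LinearEquiv.apply_symm_apply,
      LinearEquiv.apply_symm_apply, gmap_pow_single]
    rw [show (0 + a : ℕ) = a from Nat.zero_add a]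
    have hsm : ((X : k[X]) ^ b) • (Pi.single a (Submodule.Quotient.mk 1) : W k eN) =
        Pi.single a (((X : k[X]) ^ b) • (Submodule.Quotient.mk 1 :
          k[X] ⧸ (span k[X] {(X : k[X]) ^ eN a} : Submodule k[X] k[X]))) := by
      funext j
      rcases eq_or_ne j a with rfl | hne
      · rw [Pi.smul_apply, Pi.single_eq_same, Pi.single_eq_same]
      · rw [Pi.smul_apply, Pi.single_eq_of_ne hne, Pi.single_eq_of_ne hne, smul_zero]
    rw [hsm, ← Submodule.Quotient.mk_smul, smul_eq_mul, mul_one]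
    exact (ψ.apply_symm_apply _).symm
  have hmem : ψ w ∈ Submodule.span k (gens k eN) := by
    rw [span_gens_eq_top k eN m hm0]
    trivial
  have hprop : ∀ (u : W k eN), u ∈ Submodule.span k (gens k eN) →
      ∃ t ∈ Algebra.adjoin k {f, g}, t v = ψ.symm u := by
    intro u hu
    induction hu using Submodule.span_induction with
    | mem x hx =>
      obtain ⟨a, b, rfl⟩ := hx
      refine ⟨(f ^ b) * (g ^ a), ?_, hgen a b⟩
      exact mul_mem (pow_mem (Algebra.subset_adjoin (by simp)) b)
        (pow_mem (Algebra.subset_adjoin (by simp)) a)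
    | zero => exact ⟨0, zero_mem _, by simp⟩
    | add x y hx hy ihx ihy =>
      obtain ⟨t1, ht1, ht1v⟩ := ihx
      obtain ⟨t2, ht2, ht2v⟩ := ihy
      exact ⟨t1 + t2, add_mem ht1 ht2, by rw [LinearMap.add_apply, ht1v, ht2v, map_add]⟩
    | smul a x hx ihx =>
      obtain ⟨t1, ht1, ht1v⟩ := ihx
      exact ⟨a • t1, Subalgebra.smul_mem _ ht1 a,
        by rw [LinearMap.smul_apply, ht1v, map_smul]⟩
  obtain ⟨t, ht, htv⟩ := hprop (ψ w) hmem
  exact ⟨t, ht, by rw [htv, LinearEquiv.symm_apply_apply]⟩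


theorem exists_commuting_nilpotent_cyclic
    {k : Type*} [Field k] [IsAlgClosed k] {r : ℕ}
    (L : Matrix (Fin r) (Fin r) k) (hL : IsNilpotent L) :
    ∃ M : Matrix (Fin r) (Fin r) k, IsNilpotent M ∧ L * M = M * L ∧
      ∃ v : Fin r → k, ∀ w : Fin r → k,
        ∃ t ∈ Algebra.adjoin k {L, M}, t.mulVec v = w := by
  classical
  let α : Matrix (Fin r) (Fin r) k ≃ₐ[k] ((Fin r → k) →ₗ[k] (Fin r → k)) :=
    Matrix.toLinAlgEquiv'
  have hfnil : IsNilpotent (α L) := hL.map α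
  obtain ⟨gE, hgnil, hcomm, v, hv⟩ := key (α L) hfnil
  refine ⟨α.symm gE, hgnil.map α.symm, ?_, v, ?_⟩
  · apply α.injective
    rw [map_mul, map_mul, AlgEquiv.apply_symm_apply]
    exact hcomm
  · intro w
    obtain ⟨t, ht, htv⟩ := hv w
    have hmem : α.symm t ∈ (Algebra.adjoin k {α L, gE}).map (α.symm : _ →ₐ[k] _) :=
      ⟨t, ht, rfl⟩
    rw [AlgHom.map_adjoin, Set.image_insert_eq, Set.image_singleton] at hmem
    have hL' : ((α.symm : _ →ₐ[k] _) (α L) : Matrix (Fin r) (Fin r) k) = L :=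
      α.symm_apply_apply L
    rw [hL'] at hmem
    refine ⟨α.symm t, hmem, ?_⟩
    have happ : ∀ (N : Matrix (Fin r) (Fin r) k) (x : Fin r → k),
        (α N) x = N.mulVec x := fun N x => rfl
    have hts : α (α.symm t) = t := α.apply_symm_apply t
    calc (α.symm t).mulVec v = (α (α.symm t)) v := (happ _ _).symm
      _ = t v := by rw [hts]
      _ = w := htv
end
end

section
/- Let A be a finitely generated torsion-free Z-algebra which is a domain of Krull dimension d. Then the Q-algebra B = A ⊗ Q has Krull dimension strictly less than d. -/
theorem int_isJacobsonRing_aux : IsJacobsonRing ℤ := by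
  rw [isJacobsonRing_iff_prime_eq]
  intro P hP
  by_cases h : P = ⊥
  · subst h
    ext x
    simp only [Ideal.mem_jacobson_bot, Ideal.mem_bot]
    constructor
    · intro H
      have h1 := H 1
      have h2 := H (-1)
      rw [Int.isUnit_iff] at h1 h2
      omega
    · rintro rfl y; simp
  · haveI := hP.isMaximal h
    exact Ideal.jacobson_eq_self_of_isMaximal

open scoped TensorProduct in
theorem krullDim_rat_tensor_lt
    {A : Type*} [CommRing A] [IsDomain A]
    [Algebra.FiniteType ℤ A] [NoZeroSMulDivisors ℤ A]
    (d : ℕ) (hd : ringKrullDim A = d) :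
    ringKrullDim (ℚ ⊗[ℤ] A) < d := by
  classical
  haveI : IsJacobsonRing ℤ := int_isJacobsonRing_aux
  letI : Algebra A (ℚ ⊗[ℤ] A) :=
    (Algebra.TensorProduct.includeRight (R := ℤ) (A := ℚ) (B := A)).toRingHom.toAlgebra
  haveI : IsScalarTower ℤ A (ℚ ⊗[ℤ] A) := IsScalarTower.of_algebraMap_eq fun n => by
    rw [algebraMap_int_eq, RingHom.algebraMap_toAlgebra, eq_intCast (algebraMap ℤ (ℚ ⊗[ℤ] A)) n]
    exact (map_intCast
      (Algebra.TensorProduct.includeRight (R := ℤ) (A := ℚ) (B := A)).toRingHom n).symm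
  set M : Submonoid A := Algebra.algebraMapSubmonoid A (nonZeroDivisors ℤ) with hM
  have heq : (IsScalarTower.toAlgHom ℤ A (ℚ ⊗[ℤ] A)).toLinearMap = TensorProduct.mk ℤ ℚ A 1 := rfl
  haveI hloc : IsLocalization M (ℚ ⊗[ℤ] A) := by
    rw [hM, ← isLocalizedModule_iff_isLocalization, heq,
      isLocalizedModule_iff_isBaseChange (S := nonZeroDivisors ℤ) (A := ℚ)]
    exact TensorProduct.isBaseChange ℤ A ℚ
  -- the comap map on prime spectra
  let f : PrimeSpectrum (ℚ ⊗[ℤ] A) → PrimeSpectrum A := fun q =>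
    ⟨Ideal.comap (algebraMap A (ℚ ⊗[ℤ] A)) q.asIdeal,
      ((IsLocalization.isPrime_iff_isPrime_disjoint M _ _).1 q.isPrime).1⟩
  have hf : StrictMono f := by
    intro q₁ q₂ h
    have := (IsLocalization.orderIsoOfPrime M (ℚ ⊗[ℤ] A)).lt_iff_lt.mpr
      (show (⟨q₁.asIdeal, q₁.isPrime⟩ : {p : Ideal (ℚ ⊗[ℤ] A) // p.IsPrime}) <
        ⟨q₂.asIdeal, q₂.isPrime⟩ from Subtype.mk_lt_mk.mpr
          ((PrimeSpectrum.asIdeal_lt_asIdeal _ _).2 h))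
    rw [← PrimeSpectrum.asIdeal_lt_asIdeal]
    exact this
  -- no contraction of a prime of the tensor product is maximal
  have hnotmax : ∀ q : PrimeSpectrum (ℚ ⊗[ℤ] A), ¬ (f q).asIdeal.IsMaximal := by
    intro q hmax
    have hdisj : Disjoint (M : Set A) ((f q).asIdeal : Set A) :=
      ((IsLocalization.isPrime_iff_isPrime_disjoint M _ _).1 q.isPrime).2
    letI := hmax
    letI : Field (A ⧸ (f q).asIdeal) := Ideal.Quotient.field _
    haveI : Algebra.FiniteType ℤ (A ⧸ (f q).asIdeal) :=
      Algebra.FiniteType.of_surjective (Ideal.Quotient.mkₐ ℤ _)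
        (Ideal.Quotient.mkₐ_surjective ℤ _)
    haveI : Module.Finite ℤ (A ⧸ (f q).asIdeal) :=
      finite_of_finite_type_of_isJacobsonRing ℤ _
    haveI : Algebra.IsIntegral ℤ (A ⧸ (f q).asIdeal) := Algebra.IsIntegral.of_finite ℤ _
    haveI : (⊥ : Ideal (A ⧸ (f q).asIdeal)).IsMaximal := Ideal.bot_isMaximal
    have hker : (Ideal.comap (algebraMap ℤ (A ⧸ (f q).asIdeal)) ⊥).IsMaximal :=
      Ideal.isMaximal_comap_of_isIntegral_of_isMaximal (R := ℤ) ⊥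
    have hkerne : Ideal.comap (algebraMap ℤ (A ⧸ (f q).asIdeal)) ⊥ ≠ ⊥ := by
      intro hbot
      rw [hbot] at hker
      have h2 : (⊥ : Ideal ℤ) < Ideal.span {2} := by
        rw [bot_lt_iff_ne_bot, Ne, Ideal.span_singleton_eq_bot]
        norm_num
      have := hker.out.2 _ h2
      rw [Ideal.span_singleton_eq_top, Int.isUnit_iff] at this
      omega
    obtain ⟨n, hn, hn0⟩ := Submodule.exists_mem_ne_zero_of_ne_bot hkerne
    have hnq : algebraMap ℤ A n ∈ (f q).asIdeal := by
      rw [← Ideal.Quotient.eq_zero_iff_mem]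
      have : (Ideal.Quotient.mk (f q).asIdeal) (algebraMap ℤ A n) =
          algebraMap ℤ (A ⧸ (f q).asIdeal) n := by
        rw [IsScalarTower.algebraMap_apply ℤ A (A ⧸ (f q).asIdeal)]
        rfl
      rw [this]
      simpa [Ideal.mem_comap] using hn
    have hnM : algebraMap ℤ A n ∈ M :=
      ⟨n, mem_nonZeroDivisors_of_ne_zero hn0, rfl⟩
    exact Set.disjoint_left.1 hdisj hnM hnq
  -- each chain in Spec (ℚ ⊗ A) extends to a strictly longer chain in Spec A
  have key : ∀ p : LTSeries (PrimeSpectrum (ℚ ⊗[ℤ] A)), p.length + 1 ≤ d := by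
    intro p
    obtain ⟨m, hm, hle⟩ := Ideal.exists_le_maximal (f p.last).asIdeal
      (f p.last).isPrime.ne_top
    have hlt : (f p.last).asIdeal < m := lt_of_le_of_ne hle fun h => hnotmax p.last (h ▸ hm)
    let P : LTSeries (PrimeSpectrum A) := (p.map f hf).snoc ⟨m, hm.isPrime⟩ (by
      rw [LTSeries.last_map]
      exact (PrimeSpectrum.asIdeal_lt_asIdeal _ _).1 hlt)
    have hlen := Order.LTSeries.length_le_krullDim P
    have hPlen : P.length = p.length + 1 := by simp [P]
    rw [hPlen, show Order.krullDim (PrimeSpectrum A) = ringKrullDim A from rfl, hd] at hlen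
    exact_mod_cast hlen
  rcases isEmpty_or_nonempty (PrimeSpectrum (ℚ ⊗[ℤ] A)) with h | h
  · rw [ringKrullDim, Order.krullDim_eq_bot]
    have : ((d : ℕ∞) : WithBot ℕ∞) = (d : WithBot ℕ∞) := by norm_cast
    rw [← this]
    exact WithBot.bot_lt_coe _
  · obtain ⟨q⟩ := h
    haveI : Nonempty (PrimeSpectrum (ℚ ⊗[ℤ] A)) := ⟨q⟩
    have h1 : 1 ≤ d := key (RelSeries.singleton _ q)
    have hle : ringKrullDim (ℚ ⊗[ℤ] A) ≤ ((d - 1 : ℕ) : WithBot ℕ∞) := by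
      rw [ringKrullDim, Order.krullDim_eq_iSup_length]
      have hc : ((d - 1 : ℕ) : WithBot ℕ∞) = (((d - 1 : ℕ) : ℕ∞) : WithBot ℕ∞) := by norm_cast
      rw [hc, WithBot.coe_le_coe]
      exact iSup_le fun p => Nat.cast_le.mpr (by have := key p; omega)
    refine lt_of_le_of_lt hle ?_
    have hdlt : (d - 1 : ℕ) < d := by omega
    exact_mod_cast hdlt
end
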